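/- In the spin-s representation, for every m ∈ {−s, −s+1, …, s} the transition probability from the maximal-weight state |s⟩ under the rotation by angle π/2 about the 2-axis is binomial: |⟨m| exp(−i(π/2)L₂) |s⟩|² = 2^{−2s} · C(2s, s+m), where C denotes the binomial coefficient. -/

import Mathlib

open Matrix Complex
open scoped ComplexOrder

noncomputable section

/-- spin value s = j/2 -/
def sVal (j : ℕ) : ℝ := (j : ℝ) / 2

/-- m-value of the k-th basis vector: m = k - s -/
def mVal (j : ℕ) (k : Fin (j + 1)) : ℝ := (k : ℝ) - sVal j

/-- L₃ -/
def L3 (j : ℕ) : Matrix (Fin (j + 1)) (Fin (j + 1)) ℂ :=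
  Matrix.diagonal (fun k => (mVal j k : ℂ))

/-- raising operator L₊ -/
def Lp (j : ℕ) : Matrix (Fin (j + 1)) (Fin (j + 1)) ℂ :=
  Matrix.of fun i k =>
    if (i : ℕ) = (k : ℕ) + 1 then
      ((Real.sqrt (sVal j * (sVal j + 1) - mVal j k * (mVal j k + 1)) : ℝ) : ℂ)
    else 0

/-- lowering operator L₋ -/
def Lm (j : ℕ) : Matrix (Fin (j + 1)) (Fin (j + 1)) ℂ :=
  Matrix.of fun i k =>
    if (i : ℕ) + 1 = (k : ℕ) then
      ((Real.sqrt (sVal j * (sVal j + 1) - mVal j k * (mVal j k - 1)) : ℝ) : ℂ)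
    else 0

/-- L₁ = (L₊ + L₋)/2 -/
def L1 (j : ℕ) : Matrix (Fin (j + 1)) (Fin (j + 1)) ℂ := (1 / 2 : ℂ) • (Lp j + Lm j)

/-- L₂ = (L₊ − L₋)/(2i) -/
def L2 (j : ℕ) : Matrix (Fin (j + 1)) (Fin (j + 1)) ℂ :=
  (1 / (2 * Complex.I)) • (Lp j - Lm j)

/-- density operator -/
def IsDensity {j : ℕ} (ρ : Matrix (Fin (j + 1)) (Fin (j + 1)) ℂ) : Prop :=
  ρ.PosSemidef ∧ ρ.trace = 1

/-- expectation value -/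
def expVal {j : ℕ} (ρ A : Matrix (Fin (j + 1)) (Fin (j + 1)) ℂ) : ℝ :=
  ((ρ * A).trace).re

/-- variance -/
def Var {j : ℕ} (ρ A : Matrix (Fin (j + 1)) (Fin (j + 1)) ℂ) : ℝ :=
  ((ρ * A ^ 2).trace).re - (((ρ * A).trace).re) ^ 2

/-- angular momentum component along a direction e ∈ ℝ³ -/
def dirL (j : ℕ) (e : Fin 3 → ℝ) : Matrix (Fin (j + 1)) (Fin (j + 1)) ℂ :=
  (e 0 : ℂ) • L1 j + (e 1 : ℂ) • L2 j + (e 2 : ℂ) • L3 j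


/-! ### Auxiliary machinery for the proof -/

section AuxSpin

lemma Lp_entry' (j : ℕ) (i k : Fin (j+1)) :
    Lp j i k = if (i : ℕ) = (k : ℕ) + 1 then
      ((Real.sqrt (((j:ℝ) - (k:ℕ)) * (((k:ℕ):ℝ)+1)) : ℝ) : ℂ) else 0 := by
  unfold Lp
  simp only [Matrix.of_apply]
  congr 2
  unfold mVal sVal
  congr 1
  ring

lemma Lm_entry' (j : ℕ) (i k : Fin (j+1)) :
    Lm j i k = if (i : ℕ) + 1 = (k : ℕ) then
      ((Real.sqrt (((j:ℝ) - (k:ℕ) + 1) * ((k:ℕ):ℝ)) : ℝ) : ℂ) else 0 := by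
  unfold Lm
  simp only [Matrix.of_apply]
  congr 2
  unfold mVal sVal
  congr 1
  ring

/-- square root of binomial coefficient -/
def ccoef (j i : ℕ) : ℝ := Real.sqrt (j.choose i)

lemma cast_sub_helper' (a b : ℕ) (h : b ≤ a) : ((a:ℝ) - (b:ℝ)) = ((a - b : ℕ) : ℝ) := by
  push_cast [h]; ring

lemma sqrt_combine' (A n C1 C2 : ℝ) (hA : 0 ≤ A) (hn : 0 ≤ n)
    (h : A * C1 = n ^ 2 * C2) :
    Real.sqrt A * Real.sqrt C1 = n * Real.sqrt C2 := by
  rw [← Real.sqrt_mul hA, h, Real.sqrt_mul (by positivity), Real.sqrt_sq hn]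

lemma sq1' (j i : ℕ) (h1 : 1 ≤ i) (h2 : i ≤ j) :
    Real.sqrt (((j:ℝ) - ((i-1 : ℕ):ℝ)) * (((i-1:ℕ):ℝ)+1)) * ccoef j (i-1)
      = (i:ℝ) * ccoef j i := by
  have h3 : i - 1 ≤ j := by omega
  apply sqrt_combine' _ _ _ _ (by rw [cast_sub_helper' j (i-1) h3]; positivity) (by positivity)
  have key : j.choose i * i = j.choose (i-1) * (j - (i-1)) := by
    have := Nat.choose_succ_right_eq j (i-1)
    have hi : i - 1 + 1 = i := by omega
    rwa [hi] at this
  have key' := congrArg (fun n : ℕ => (n:ℝ)) key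
  simp only [Nat.cast_mul] at key'
  rw [← cast_sub_helper' j (i-1) h3] at key'
  have hi1 : (((i-1:ℕ)):ℝ) + 1 = (i:ℝ) := by
    have : i - 1 + 1 = i := by omega
    exact_mod_cast congrArg (fun n : ℕ => (n:ℝ)) this
  rw [hi1]
  nlinarith [key']

lemma sq2' (j i : ℕ) (h : i < j) :
    Real.sqrt (((j:ℝ) - ((i+1 : ℕ):ℝ) + 1) * ((i:ℝ)+1)) * ccoef j (i+1)
      = ((j - i : ℕ):ℝ) * ccoef j i := by
  have hji : ((j:ℝ) - ((i+1:ℕ):ℝ) + 1) = ((j - i : ℕ) : ℝ) := by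
    push_cast [le_of_lt h]; ring
  rw [hji]
  apply sqrt_combine' _ _ _ _ (by positivity) (by positivity)
  have key : j.choose (i+1) * (i+1) = j.choose i * (j - i) := Nat.choose_succ_right_eq j i
  have key' := congrArg (fun n : ℕ => (n:ℝ)) key
  simp only [Nat.cast_mul] at key'
  push_cast at key' ⊢
  nlinarith [key']

lemma sum_ite_pred' {n : ℕ} (i : Fin n) (F : Fin n → ℂ) :
    (∑ k : Fin n, if (i:ℕ) = (k:ℕ)+1 then F k else 0)
      = if h : 0 < (i:ℕ) then F ⟨(i:ℕ)-1, by omega⟩ else 0 := by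
  split_ifs with h
  · rw [Finset.sum_eq_single (⟨(i:ℕ)-1, by omega⟩ : Fin n)]
    · rw [if_pos]
      show (i:ℕ) = ((i:ℕ)-1)+1
      omega
    · intro b _ hb
      by_cases hc : (i:ℕ) = (b:ℕ)+1
      · exact absurd (Fin.ext (show (b:ℕ) = (i:ℕ)-1 by omega)) hb
      · rw [if_neg hc]
    · simp
  · refine Finset.sum_eq_zero fun k _ => ?_
    rw [if_neg (by omega)]

lemma sum_ite_succ' {n : ℕ} (i : Fin n) (F : Fin n → ℂ) :
    (∑ k : Fin n, if (i:ℕ)+1 = (k:ℕ) then F k else 0)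
      = if h : (i:ℕ)+1 < n then F ⟨(i:ℕ)+1, h⟩ else 0 := by
  split_ifs with h
  · rw [Finset.sum_eq_single (⟨(i:ℕ)+1, h⟩ : Fin n)]
    · rw [if_pos rfl]
    · intro b _ hb
      by_cases hc : (i:ℕ)+1 = (b:ℕ)
      · exact absurd (Fin.ext (show (b:ℕ) = (i:ℕ)+1 by omega)) hb
      · rw [if_neg hc]
    · simp
  · refine Finset.sum_eq_zero fun k hk => ?_
    by_cases hc : (i:ℕ)+1 = (k:ℕ)
    · exact absurd (hc ▸ k.isLt) h
    · rw [if_neg hc]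

/-- the real generator: `exp(t • Bm) = exp(-i t L₂)` -/
def Bm (j : ℕ) : Matrix (Fin (j+1)) (Fin (j+1)) ℂ := (-(1/2):ℂ) • (Lp j - Lm j)

/-- the candidate solution -/
def gsol (j : ℕ) (t : ℝ) : Fin (j+1) → ℂ := fun i =>
  ((ccoef j i * Real.cos (t/2) ^ (i:ℕ) * Real.sin (t/2) ^ (j - (i:ℕ)) : ℝ) : ℂ)

/-- the derivative of the candidate solution -/
def Dval (j : ℕ) (t : ℝ) (i : Fin (j+1)) : ℝ :=
  ccoef j i * (((j - (i:ℕ) : ℕ):ℝ) * Real.cos (t/2) ^ ((i:ℕ)+1)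
      * Real.sin (t/2) ^ ((j - (i:ℕ)) - 1)
    - ((i:ℕ):ℝ) * Real.cos (t/2) ^ ((i:ℕ)-1) * Real.sin (t/2) ^ (j - (i:ℕ) + 1)) / 2

lemma hSp' (j : ℕ) (t : ℝ) (i : Fin (j+1)) :
    ((Lp j).mulVec (gsol j t)) i
      = ((((i:ℕ):ℝ) * ccoef j (i:ℕ) * Real.cos (t/2) ^ ((i:ℕ)-1)
          * Real.sin (t/2) ^ (j - (i:ℕ) + 1) : ℝ) : ℂ) := by
  rw [Matrix.mulVec, dotProduct]
  simp only [Lp_entry', ite_mul, zero_mul]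
  rw [sum_ite_pred' i
    (fun k => ((Real.sqrt (((j:ℝ) - (k:ℕ)) * (((k:ℕ):ℝ)+1)) : ℝ) : ℂ) * gsol j t k)]
  split_ifs with h
  · have hij : (i:ℕ) ≤ j := by omega
    simp only [gsol, Fin.val_mk]
    rw [← Complex.ofReal_mul]
    congr 1
    have e1 : j - ((i:ℕ)-1) = j - (i:ℕ) + 1 := by omega
    rw [e1]
    have := sq1' j (i:ℕ) h hij
    linear_combination (Real.cos (t/2) ^ ((i:ℕ)-1) * Real.sin (t/2) ^ (j - (i:ℕ) + 1)) * this
  · have h0 : (i:ℕ) = 0 := by omega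
    rw [h0]
    norm_num

lemma hSm' (j : ℕ) (t : ℝ) (i : Fin (j+1)) :
    ((Lm j).mulVec (gsol j t)) i
      = ((((j - (i:ℕ) : ℕ):ℝ) * ccoef j (i:ℕ) * Real.cos (t/2) ^ ((i:ℕ)+1)
          * Real.sin (t/2) ^ ((j - (i:ℕ)) - 1) : ℝ) : ℂ) := by
  rw [Matrix.mulVec, dotProduct]
  simp only [Lm_entry', ite_mul, zero_mul]
  rw [sum_ite_succ' i
    (fun k => ((Real.sqrt (((j:ℝ) - (k:ℕ) + 1) * ((k:ℕ):ℝ)) : ℝ) : ℂ) * gsol j t k)]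
  split_ifs with h
  · have hij : (i:ℕ) < j := by omega
    simp only [gsol, Fin.val_mk]
    rw [← Complex.ofReal_mul]
    congr 1
    have e1 : j - ((i:ℕ)+1) = (j - (i:ℕ)) - 1 := by omega
    rw [e1]
    have := sq2' j (i:ℕ) hij
    push_cast [Nat.cast_sub hij.le] at this ⊢
    linear_combination (Real.cos (t/2) ^ ((i:ℕ)+1) * Real.sin (t/2) ^ ((j - (i:ℕ)) - 1)) * this
  · have h0 : (i:ℕ) = j := by omega
    have : (j - (i:ℕ) : ℕ) = 0 := by omega
    rw [this]
    norm_num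

lemma claimA' (j : ℕ) (t : ℝ) (i : Fin (j+1)) :
    ((Bm j).mulVec (gsol j t)) i = ((Dval j t i : ℝ) : ℂ) := by
  unfold Bm
  rw [Matrix.smul_mulVec, Matrix.sub_mulVec]
  simp only [Pi.smul_apply, Pi.sub_apply, smul_eq_mul]
  rw [hSp', hSm', Dval]
  push_cast
  ring

lemma claimB' (j : ℕ) (t : ℝ) (i : Fin (j+1)) :
    HasDerivAt (fun t => gsol j t i) ((Dval j t i : ℝ) : ℂ) t := by
  have hhalf : HasDerivAt (fun t : ℝ => t/2) (1/2) t := (hasDerivAt_id t).div_const 2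
  have hc : HasDerivAt (fun t : ℝ => Real.cos (t/2)) (-Real.sin (t/2) * (1/2)) t :=
    by have := (Real.hasDerivAt_cos (t/2)).comp t hhalf; exact this
  have hs : HasDerivAt (fun t : ℝ => Real.sin (t/2)) (Real.cos (t/2) * (1/2)) t :=
    by have := (Real.hasDerivAt_sin (t/2)).comp t hhalf; exact this
  have hprod := ((hc.pow (i:ℕ)).mul (hs.pow (j - (i:ℕ)))).const_mul (ccoef j (i:ℕ))
  have hfun : (fun t : ℝ =>
        ccoef j (i:ℕ) * (Real.cos (t/2) ^ (i:ℕ) * Real.sin (t/2) ^ (j - (i:ℕ))))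
      = fun t : ℝ => ccoef j (i:ℕ) * Real.cos (t/2) ^ (i:ℕ) * Real.sin (t/2) ^ (j - (i:ℕ)) := by
    funext t; ring
  simp only [Pi.pow_apply, Pi.mul_apply] at hprod
  rw [hfun] at hprod
  have hval : ccoef j (i:ℕ) *
      ((((i:ℕ):ℝ) * Real.cos (t/2) ^ ((i:ℕ)-1) * (-Real.sin (t/2) * (1/2)))
          * Real.sin (t/2) ^ (j - (i:ℕ))
        + Real.cos (t/2) ^ (i:ℕ) * ((((j - (i:ℕ) : ℕ)):ℝ)
          * Real.sin (t/2) ^ ((j - (i:ℕ)) - 1) * (Real.cos (t/2) * (1/2))))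
      = Dval j t i := by
    rw [Dval, pow_succ (Real.cos (t/2)) (i:ℕ), pow_succ (Real.sin (t/2)) (j - (i:ℕ))]
    ring
  rw [hval] at hprod
  exact hprod.ofReal_comp

lemma gsol_hasDeriv (j : ℕ) (t : ℝ) :
    HasDerivAt (gsol j) ((Bm j).mulVec (gsol j t)) t := by
  apply hasDerivAt_pi.2
  intro i
  have := claimB' j t i
  rwa [← claimA' j t i] at this

end AuxSpin

section AuxExp

attribute [local instance] Matrix.linftyOpNormedAddCommGroup Matrix.linftyOpNormedRing
  Matrix.linftyOpNormedAlgebra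

open NormedSpace

/-- column extraction as an ℝ-linear map -/
def colL (j : ℕ) : Matrix (Fin (j+1)) (Fin (j+1)) ℂ →ₗ[ℝ] (Fin (j+1) → ℂ) where
  toFun X := fun i => X i (Fin.last j)
  map_add' _ _ := rfl
  map_smul' _ _ := rfl

def colCLM (j : ℕ) : Matrix (Fin (j+1)) (Fin (j+1)) ℂ →L[ℝ] (Fin (j+1) → ℂ) :=
  LinearMap.toContinuousLinearMap (colL j)

def Fx (j : ℕ) (t : ℝ) : Fin (j+1) → ℂ := colCLM j (NormedSpace.exp (t • Bm j))

lemma hFx (j : ℕ) (t : ℝ) : HasDerivAt (Fx j) ((Bm j).mulVec (Fx j t)) t := by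
  have h := hasDerivAt_exp_smul_const' (𝕂 := ℝ) (Bm j) t
  have h2 := ((colCLM j).hasFDerivAt).comp_hasDerivAt t h
  convert h2 using 1
  all_goals rfl

def mvCLM (j : ℕ) : (Fin (j+1) → ℂ) →L[ℝ] (Fin (j+1) → ℂ) :=
  LinearMap.toContinuousLinearMap (((Bm j).mulVecLin).restrictScalars ℝ)

lemma unique_sol (j : ℕ) (g : ℝ → Fin (j+1) → ℂ)
    (hg : ∀ t, HasDerivAt g ((Bm j).mulVec (g t)) t)
    (h0 : Fx j 0 = g 0) : Fx j (Real.pi/2) = g (Real.pi/2) := by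
  have hlip : ∀ t : ℝ, LipschitzWith ‖mvCLM j‖₊ (fun x => (Bm j).mulVec x) := by
    intro t
    have := (mvCLM j).lipschitz
    exact this
  have := ODE_solution_unique (v := fun _ x => (Bm j).mulVec x) (K := ‖mvCLM j‖₊)
    (a := 0) (b := Real.pi/2)
    hlip
    (fun t _ => ((hFx j t).continuousAt).continuousWithinAt)
    (fun t _ => (hFx j t).hasDerivWithinAt)
    (fun t _ => ((hg t).continuousAt).continuousWithinAt)
    (fun t _ => (hg t).hasDerivWithinAt)
    h0
  exact this ⟨by positivity, le_refl _⟩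

lemma Fx_init (j : ℕ) : Fx j 0 = gsol j 0 := by
  funext i
  have h0 : (0:ℝ) • Bm j = 0 := zero_smul _ _
  have : Fx j 0 i = (1 : Matrix (Fin (j+1)) (Fin (j+1)) ℂ) i (Fin.last j) := by
    rw [Fx, h0, NormedSpace.exp_zero]
    rfl
  rw [this]
  by_cases hi : i = Fin.last j
  · subst hi
    rw [Matrix.one_apply_eq]
    simp [gsol, ccoef, Fin.val_last, Nat.sub_self, Nat.choose_self]
  · rw [Matrix.one_apply_ne hi]
    have hne : (i:ℕ) ≠ j := by
      intro h
      exact hi (Fin.ext (by simp [h, Fin.val_last]))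
    have hlt : (i:ℕ) < j + 1 := i.isLt
    simp [gsol, zero_pow (show j - (i:ℕ) ≠ 0 by omega)]

lemma Mkey (j : ℕ) :
    ((-(Real.pi / 2) * Complex.I : ℂ) • L2 j) = (Real.pi/2 : ℝ) • Bm j := by
  rw [L2, Bm, smul_smul, ← algebraMap_smul ℂ (Real.pi/2 : ℝ) ((-(1/2):ℂ) • (Lp j - Lm j)),
    Complex.coe_algebraMap, smul_smul]
  congr 1
  have hI := Complex.I_ne_zero
  field_simp
  push_cast; ring

lemma final_entry (j : ℕ) (k : Fin (j+1)) :
    (NormedSpace.exp ((-(Real.pi / 2) * Complex.I : ℂ) • L2 j)) k (Fin.last j)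
      = gsol j (Real.pi/2) k := by
  rw [Mkey]
  have he : NormedSpace.exp ((Real.pi/2 : ℝ) • Bm j) = NormedSpace.exp ((Real.pi/2 : ℝ) • Bm j) :=
    rfl
  rw [he]
  have h := unique_sol j (gsol j) (gsol_hasDeriv j) (Fx_init j)
  have : (NormedSpace.exp ((Real.pi/2:ℝ) • Bm j)) k (Fin.last j) = Fx j (Real.pi/2) k := rfl
  rw [this, h]

end AuxExp

open NormedSpace in
/-- |⟨m| exp(−i(π/2)L₂) |s⟩|² = 2^{−2s} C(2s, s+m); here the basis
    vector of weight m is indexed by k = s + m ∈ {0, …, 2s = j}. -/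
theorem rotated_coherent_state_binomial (j : ℕ) (hj : 0 < j) (k : Fin (j + 1)) :
    ‖(NormedSpace.exp ((-(Real.pi / 2) * Complex.I : ℂ) • L2 j)) k (Fin.last j)‖ ^ 2 =
      (j.choose k : ℝ) / 2 ^ j := by
  rw [show ‖(NormedSpace.exp ((-(Real.pi / 2) * Complex.I : ℂ) • L2 j)) k (Fin.last j)‖
      = ‖(gsol j (Real.pi/2) k : ℂ)‖ from by rw [final_entry j k]]
  rw [gsol]
  rw [Complex.norm_real, Real.norm_eq_abs, _root_.sq_abs]
  have hq : Real.pi / 2 / 2 = Real.pi / 4 := by ring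
  rw [hq, Real.cos_pi_div_four, Real.sin_pi_div_four]
  have hsq : (Real.sqrt 2 / 2) ^ 2 = 1/2 := by
    rw [div_pow, Real.sq_sqrt (by norm_num : (0:ℝ) ≤ 2)]
    norm_num
  have hcc : ccoef j (k:ℕ) ^ 2 = (j.choose k : ℝ) :=
    Real.sq_sqrt (by positivity)
  have hk : (k:ℕ) + (j - (k:ℕ)) = j := by omega
  calc (ccoef j (k:ℕ) * (Real.sqrt 2 / 2) ^ (k:ℕ) * (Real.sqrt 2 / 2) ^ (j - (k:ℕ))) ^ 2
      = ccoef j (k:ℕ) ^ 2 * (((Real.sqrt 2 / 2) ^ (k:ℕ)) ^ 2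
          * ((Real.sqrt 2 / 2) ^ (j - (k:ℕ))) ^ 2) := by ring
    _ = ccoef j (k:ℕ) ^ 2 * (((Real.sqrt 2 / 2) ^ 2) ^ (k:ℕ)
          * ((Real.sqrt 2 / 2) ^ 2) ^ (j - (k:ℕ))) := by
        rw [pow_right_comm (Real.sqrt 2 / 2) (k:ℕ) 2, pow_right_comm (Real.sqrt 2 / 2) (j - (k:ℕ)) 2]
    _ = ccoef j (k:ℕ) ^ 2 * ((Real.sqrt 2 / 2) ^ 2) ^ ((k:ℕ) + (j - (k:ℕ))) := by
        rw [← pow_add]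
    _ = (j.choose k : ℝ) * (1/2 : ℝ) ^ j := by rw [hcc, hsq, hk]
    _ = (j.choose k : ℝ) / 2 ^ j := by
        rw [one_div, inv_pow]
        ring
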